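/- A totally positive algebraic d-number α = 3^a (u₁^b u₂^c)² β^d (with a ≥ 0, b,c ∈ Z, d ∈ {0,1,2}) is a perfect square in Q(ζ₉)⁺ if and only if a ≡ d (mod 2). -/

import Mathlib

noncomputable section

/-- `ζ₉ = exp(2πi/9)`. -/
def z9 : ℂ := Complex.exp (2 * Real.pi * Complex.I / 9)

/-- The totally real cubic field `Q(ζ₉)⁺ = Q(2cos(π/9))`, as a subfield of `ℂ`. -/
def Kplus : IntermediateField ℚ ℂ :=
  IntermediateField.adjoin ℚ {((2 * Real.cos (Real.pi / 9) : ℝ) : ℂ)}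

def u1 : ℂ := z9 - z9 ^ 2 - z9 ^ 5

def u2 : ℂ := 1 - z9 ^ 4 - z9 ^ 5

lemma h9 : z9 ^ 9 = 1 := by
  rw [z9, ← Complex.exp_nat_mul]
  rw [show ((9:ℕ):ℂ) * (2 * Real.pi * Complex.I / 9) = 2 * Real.pi * Complex.I by push_cast; ring]
  exact Complex.exp_two_pi_mul_I

lemma h6 : z9 ^ 6 + z9 ^ 3 + 1 = 0 := by
  have hne : z9 ^ 3 ≠ 1 := by
    intro h
    rw [z9, ← Complex.exp_nat_mul, Complex.exp_eq_one_iff] at h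
    obtain ⟨n, hn⟩ := h
    have hπI : (Real.pi : ℂ) * Complex.I ≠ 0 :=
      mul_ne_zero (by exact_mod_cast Real.pi_ne_zero) Complex.I_ne_zero
    have h3 : ((3 * n : ℤ) : ℂ) = 1 := by
      push_cast
      apply mul_right_cancel₀ hπI
      push_cast at hn
      linear_combination (-3/2) * hn
    have : (3 * n : ℤ) = 1 := by exact_mod_cast h3
    omega
  have h0 : (z9 ^ 3 - 1) * (z9 ^ 6 + z9 ^ 3 + 1) = 0 := by
    linear_combination h9
  rcases mul_eq_zero.mp h0 with h | h
  · exact absurd (by linear_combination h) hne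
  · exact h

lemma hbeta : (2 - z9 ^ 4 - z9 ^ 5) ^ 3 = 3 * u1 ^ 2 * u2 ^ 2 := by
  unfold u1 u2
  linear_combination (8 - 3*z9^2 - 2*z9^3 - 15*z9^4 - 9*z9^5 + 6*z9^6 + 3*z9^7 + 12*z9^8
    + 14*z9^9 - 3*z9^11 - 3*z9^12 - 6*z9^13 - 3*z9^14) * h6

lemma hu1 : u1 * (1 + z9 - z9 ^ 2 + z9 ^ 4) = 1 := by
  unfold u1
  linear_combination (-1 + z9 - z9^3) * h6

lemma hu2 : u2 * (-z9 + z9 ^ 2 - z9 ^ 4) = 1 := by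
  unfold u2
  linear_combination (-1 - z9 + z9^2 + z9^3) * h6

def cgen : ℂ := ((2 * Real.cos (Real.pi / 9) : ℝ) : ℂ)

open Polynomial in
lemma hcgen : cgen ^ 3 - 3 * cgen - 1 = 0 := by
  have h1 := Real.cos_three_mul (Real.pi / 9)
  rw [show 3 * (Real.pi / 9) = Real.pi / 3 by ring, Real.cos_pi_div_three] at h1
  have hr : (2 * Real.cos (Real.pi / 9)) ^ 3 - 3 * (2 * Real.cos (Real.pi / 9)) - 1 = 0 := by
    linear_combination -2 * h1
  unfold cgen
  exact_mod_cast hr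

open Polynomial in
def pQ : ℚ[X] := X ^ 3 - C 3 * X - 1
open Polynomial in
def pZ : ℤ[X] := X ^ 3 - C 3 * X - 1

open Polynomial in
lemma pZ_monic : pZ.Monic := by
  unfold pZ
  monicity!

open Polynomial in
lemma pQ_monic : pQ.Monic := by
  unfold pQ
  monicity!

open Polynomial in
lemma pZ_map_Q : pZ.map (algebraMap ℤ ℚ) = pQ := by
  unfold pZ pQ
  simp only [Polynomial.map_sub, Polynomial.map_pow, Polynomial.map_mul, Polynomial.map_X,
    Polynomial.map_one, Polynomial.map_C]
  norm_num

open Polynomial in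
lemma pQ_irr : Irreducible pQ := by
  rw [← pZ_map_Q, ← pZ_monic.irreducible_iff_irreducible_map_fraction_map]
  apply pZ_monic.irreducible_of_irreducible_map (Int.castRingHom (ZMod 2))
  have hmap : pZ.map (Int.castRingHom (ZMod 2)) = X ^ 3 + X + 1 := by
    unfold pZ
    simp only [Polynomial.map_sub, Polynomial.map_pow, Polynomial.map_mul, Polynomial.map_X,
      Polynomial.map_one, Polynomial.map_C]
    have h3 : ((Int.castRingHom (ZMod 2)) 3) = 1 := by decide
    rw [h3, Polynomial.C_1, one_mul]
    have h2 : (2 : (ZMod 2)[X]) = 0 := by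
      rw [← map_ofNat (C : ZMod 2 →+* (ZMod 2)[X]) 2, show (2 : ZMod 2) = 0 from rfl, map_zero]
    linear_combination (-X - 1) * h2
  rw [hmap]
  rw [Polynomial.irreducible_iff_roots_eq_zero_of_degree_le_three]
  · rw [Multiset.eq_zero_iff_forall_notMem]
    intro a ha
    have hne : (X ^ 3 + X + 1 : (ZMod 2)[X]) ≠ 0 := by
      intro h
      have := congrArg (Polynomial.coeff · 0) h
      simp at this
    rw [Polynomial.mem_roots hne, Polynomial.IsRoot] at ha
    simp only [Polynomial.eval_add, Polynomial.eval_pow, Polynomial.eval_X,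
      Polynomial.eval_one] at ha
    revert ha
    fin_cases a <;> decide
  · rw [show (X ^ 3 + X + 1 : (ZMod 2)[X]).natDegree = 3 by compute_degree!]
    norm_num
  · rw [show (X ^ 3 + X + 1 : (ZMod 2)[X]).natDegree = 3 by compute_degree!]

open Polynomial in
lemma cgen_aeval : aeval cgen pQ = 0 := by
  simp only [pQ, map_sub, map_mul, map_pow, aeval_X, aeval_C, map_one, map_ofNat]
  linear_combination hcgen

open Polynomial in
lemma cgen_int : IsIntegral ℚ cgen := ⟨pQ, pQ_monic, by
  simpa [aeval_def] using cgen_aeval⟩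

open Polynomial in
lemma minpoly_cgen : minpoly ℚ cgen = pQ :=
  (minpoly.eq_of_irreducible_of_monic pQ_irr cgen_aeval pQ_monic).symm

open Polynomial in
lemma finrank_Kplus : Module.finrank ℚ Kplus = 3 := by
  have h : Kplus = IntermediateField.adjoin ℚ {cgen} := rfl
  rw [h, IntermediateField.adjoin.finrank cgen_int, minpoly_cgen]
  unfold pQ
  compute_degree!

open Polynomial in
instance Kplus_fd : FiniteDimensional ℚ Kplus :=
  IntermediateField.adjoin.finiteDimensional cgen_int

open Polynomial in
lemma no_sqrt3 (x : Kplus) : x ^ 2 ≠ 3 := by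
  intro hx
  have hint : IsIntegral ℚ x := IsIntegral.of_finite ℚ x
  have hdvd3 : (minpoly ℚ x).natDegree ∣ 3 := finrank_Kplus ▸ minpoly.degree_dvd hint
  have hdvdq : minpoly ℚ x ∣ X ^ 2 - C 3 := by
    apply minpoly.dvd ℚ x
    simp only [map_sub, map_pow, aeval_X, aeval_C, map_ofNat]
    rw [hx]
    ring
  have hmon : (X ^ 2 - C (3:ℚ)).Monic := by monicity!
  have hle : (minpoly ℚ x).natDegree ≤ 2 := by
    have := Polynomial.natDegree_le_of_dvd hdvdq hmon.ne_zero
    have h2 : (X ^ 2 - C (3:ℚ)).natDegree = 2 := by compute_degree!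
    omega
  have hpos := minpoly.natDegree_pos hint
  have h1 : (minpoly ℚ x).natDegree = 1 := by
    rcases (Nat.dvd_prime Nat.prime_three).mp hdvd3 with h | h <;> omega
  rw [minpoly.natDegree_eq_one_iff] at h1
  obtain ⟨q, hq⟩ := h1
  have hq3 : q ^ 2 = 3 := by
    apply (algebraMap ℚ Kplus).injective
    rw [map_pow, hq, hx, map_ofNat]
  have h3 : ((q : ℝ)) ^ 2 = 3 := by exact_mod_cast congrArg (Rat.cast (K := ℝ)) hq3
  have hirr : Irrational (Real.sqrt 3) := by
    simpa using Nat.prime_three.irrational_sqrt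
  apply hirr
  exact ⟨|q|, by rw [← h3, Real.sqrt_sq_eq_abs, Rat.cast_abs]⟩

/-- A totally positive algebraic d-number `α = 3^a (u₁^b u₂^c)² β^d` (with `a ≥ 0`,
`b, c ∈ ℤ`, `d ∈ {0,1,2}`) is a perfect square in `Q(ζ₉)⁺` iff `a ≡ d (mod 2)`. -/
theorem stmt14 (U1 U2 B : Kplus)
    (hU1 : (U1 : ℂ) = u1) (hU2 : (U2 : ℂ) = u2)
    (hB : (B : ℂ) = 2 - z9 ^ 4 - z9 ^ 5)
    (a : ℕ) (b c : ℤ) (d : ℕ) (hd : d ≤ 2) :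
    (∃ x : Kplus, x ^ 2 = 3 ^ a * (U1 ^ b * U2 ^ c) ^ 2 * B ^ d) ↔ a % 2 = d % 2 := by
  have hU1ne : U1 ≠ 0 := by
    intro h
    apply left_ne_zero_of_mul_eq_one hu1
    rw [← hU1, h]
    simp
  have hU2ne : U2 ≠ 0 := by
    intro h
    apply left_ne_zero_of_mul_eq_one hu2
    rw [← hU2, h]
    simp
  have hB3 : B ^ 3 = 3 * U1 ^ 2 * U2 ^ 2 := by
    have h : ((B ^ 3 : Kplus) : ℂ) = ((3 * U1 ^ 2 * U2 ^ 2 : Kplus) : ℂ) := by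
      push_cast [hB, hU1, hU2]
      exact hbeta
    exact_mod_cast h
  have h3ne : (3 : Kplus) ≠ 0 := by
    intro h
    have := congrArg (fun t : Kplus => (t : ℂ)) h
    push_cast at this
    norm_num at this
  constructor
  · rintro ⟨x, hx⟩
    by_contra hne
    set w := U1 ^ b * U2 ^ c with hw
    have hwne : w ≠ 0 := mul_ne_zero (zpow_ne_zero b hU1ne) (zpow_ne_zero c hU2ne)
    set W := w ^ 3 * U1 ^ d * U2 ^ d with hW
    have hWne : W ≠ 0 :=
      mul_ne_zero (mul_ne_zero (pow_ne_zero 3 hwne) (pow_ne_zero d hU1ne)) (pow_ne_zero d hU2ne)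
    have key : (x ^ 3) ^ 2 = 3 ^ (3 * a + d) * W ^ 2 := by
      calc (x ^ 3) ^ 2 = (x ^ 2) ^ 3 := by ring
        _ = 3 ^ (3 * a) * w ^ 6 * (B ^ 3) ^ d := by rw [hx]; ring
        _ = 3 ^ (3 * a) * w ^ 6 * (3 * U1 ^ 2 * U2 ^ 2) ^ d := by rw [hB3]
        _ = 3 ^ (3 * a + d) * W ^ 2 := by rw [pow_add, hW]; ring
    obtain ⟨k, hk⟩ : ∃ k, 3 * a + d = 2 * k + 1 := ⟨(3 * a + d) / 2, by omega⟩
    have h3k : (3 : Kplus) ^ k ≠ 0 := pow_ne_zero _ h3ne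
    have hsq : (x ^ 3 / (3 ^ k * W)) ^ 2 = 3 := by
      rw [div_pow, key, hk, div_eq_iff (pow_ne_zero 2 (mul_ne_zero h3k hWne))]
      ring
    exact no_sqrt3 _ hsq
  · intro hpar
    interval_cases d
    · obtain ⟨k, rfl⟩ : ∃ k, a = 2 * k := ⟨a / 2, by omega⟩
      exact ⟨3 ^ k * (U1 ^ b * U2 ^ c), by ring⟩
    · obtain ⟨k, rfl⟩ : ∃ k, a = 2 * k + 1 := ⟨a / 2, by omega⟩
      refine ⟨3 ^ k * (U1 ^ b * U2 ^ c) * U1⁻¹ * U2⁻¹ * B ^ 2, ?_⟩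
      have h2 : (U1 ^ 2 * U2 ^ 2 : Kplus) ≠ 0 :=
        mul_ne_zero (pow_ne_zero _ hU1ne) (pow_ne_zero _ hU2ne)
      apply mul_right_cancel₀ h2
      have expand : (3 ^ k * (U1 ^ b * U2 ^ c) * U1⁻¹ * U2⁻¹ * B ^ 2) ^ 2 * (U1 ^ 2 * U2 ^ 2)
          = 3 ^ (2 * k) * (U1 ^ b * U2 ^ c) ^ 2 * (U1⁻¹ * U1) ^ 2 * (U2⁻¹ * U2) ^ 2
            * (B ^ 3 * B) := by ring
      rw [expand, inv_mul_cancel₀ hU1ne, inv_mul_cancel₀ hU2ne, hB3]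
      ring
    · obtain ⟨k, rfl⟩ : ∃ k, a = 2 * k := ⟨a / 2, by omega⟩
      exact ⟨3 ^ k * (U1 ^ b * U2 ^ c) * B, by ring⟩
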